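/- Let (Ω, S) be a coherent configuration with all fibers isomorphic to C_p ≀ C_p and all inter-fiber relations of valency p. Let R be the set of regular relations (those s with ss*s = {s}). Then the union ⋃_{s ∈ R} s is an equivalence relation on Ω. -/

import Mathlib

set_option linter.unusedSectionVars false
set_option linter.unusedVariables false


open Finset
open scoped Classical

/-- A coherent configuration on a finite set `Ω`: a partition `S` of `Ω × Ω` into nonempty
relations such that the diagonal is a union of relations, `S` is closed under transposition,
and the intersection numbers `c r s u` are well defined. -/
structure CoherentConfig (Ω : Type) [Fintype Ω] [DecidableEq Ω] where
  S : Finset (Finset (Ω × Ω))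
  nonempty_mem : ∀ s ∈ S, s.Nonempty
  partition : ∀ x : Ω × Ω, ∃! s, s ∈ S ∧ x ∈ s
  diag_union : ∀ s ∈ S, (∃ x ∈ s, x.1 = x.2) → ∀ y ∈ s, y.1 = y.2
  symm_mem : ∀ s ∈ S, s.image Prod.swap ∈ S
  c : Finset (Ω × Ω) → Finset (Ω × Ω) → Finset (Ω × Ω) → ℕ
  c_spec : ∀ r ∈ S, ∀ s ∈ S, ∀ u ∈ S, ∀ x ∈ u,
    (Finset.univ.filter (fun γ : Ω => (x.1, γ) ∈ r ∧ (γ, x.2) ∈ s)).card = c r s u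

variable {Ω : Type} [Fintype Ω] [DecidableEq Ω]

/-- The diagonal relation of a subset `Δ ⊆ Ω`. -/
def diagRel (Δ : Finset Ω) : Finset (Ω × Ω) := Δ.image (fun d => (d, d))

/-- `Δ` is a fiber of the coherent configuration if its diagonal is a basis relation. -/
def IsFiber (A : CoherentConfig Ω) (Δ : Finset Ω) : Prop := diagRel Δ ∈ A.S

/-- The transpose of a relation. -/
def star (s : Finset (Ω × Ω)) : Finset (Ω × Ω) := s.image Prod.swap

/-- Every point in the domain of `s` has exactly `n` out-neighbours along `s`. -/
def HasValency (s : Finset (Ω × Ω)) (n : ℕ) : Prop :=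
  ∀ x ∈ s, (Finset.univ.filter fun γ : Ω => (x.1, γ) ∈ s).card = n

/-- `s` is a thin basis relation of the fiber scheme on `Δ`. -/
def IsThinOn (A : CoherentConfig Ω) (Δ : Finset Ω) (s : Finset (Ω × Ω)) : Prop :=
  s ∈ A.S ∧ s ⊆ Δ ×ˢ Δ ∧ HasValency s 1

/-- The complex product of two sets of basis relations. -/
def cprod (A : CoherentConfig Ω) (T U : Finset (Finset (Ω × Ω))) : Finset (Finset (Ω × Ω)) :=
  A.S.filter fun u => ∃ t ∈ T, ∃ v ∈ U, A.c t v u ≠ 0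

/-- `s` is a regular relation: `s s* s = {s}` as a complex product. -/
def Regular (A : CoherentConfig Ω) (s : Finset (Ω × Ω)) : Prop :=
  cprod A (cprod A {s} {star s}) {s} = {s}

/-- The fiber scheme on `Δ` is isomorphic to the wreath product `C_p ≀ C_p`:
it has degree `p²`, exactly `p` thin relations forming a closed subset,
and all other basis relations have valency `p`. -/
def WreathFiber (p : ℕ) (A : CoherentConfig Ω) (Δ : Finset Ω) : Prop :=
  IsFiber A Δ ∧ Δ.card = p ^ 2 ∧
  (A.S.filter fun s => IsThinOn A Δ s).card = p ∧
  (∀ s ∈ A.S, s ⊆ Δ ×ˢ Δ → HasValency s 1 ∨ HasValency s p) ∧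
  (∀ s t u : Finset (Ω × Ω), IsThinOn A Δ s → IsThinOn A Δ t → u ∈ A.S →
    A.c s (star t) u ≠ 0 → IsThinOn A Δ u)

/-- The adjacency matrix of a relation. -/
def adjM (s : Finset (Ω × Ω)) : Matrix Ω Ω ℂ := fun α β => if (α, β) ∈ s then 1 else 0

/-! ### Auxiliary machinery -/

/-- out-neighbourhood -/
def outs (s : Finset (Ω × Ω)) (a : Ω) : Finset Ω := Finset.univ.filter fun c => (a, c) ∈ s

lemma mem_outs {s : Finset (Ω × Ω)} {a c : Ω} : c ∈ outs s a ↔ (a, c) ∈ s := by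
  simp [outs]

lemma memStar {s : Finset (Ω × Ω)} {a b : Ω} : (a, b) ∈ _root_.star s ↔ (b, a) ∈ s := by
  simp only [_root_.star, Finset.mem_image, Prod.exists, Prod.swap_prod_mk, Prod.mk.injEq]
  constructor
  · rintro ⟨x, y, h, rfl, rfl⟩; exact h
  · intro h; exact ⟨b, a, h, rfl, rfl⟩

lemma starStar (s : Finset (Ω × Ω)) : _root_.star (_root_.star s) = s := by
  ext ⟨a, b⟩
  rw [memStar, memStar]

lemma starInS (A : CoherentConfig Ω) {s : Finset (Ω × Ω)} (hs : s ∈ A.S) : _root_.star s ∈ A.S :=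
  A.symm_mem s hs

lemma starCard (s : Finset (Ω × Ω)) : (_root_.star s).card = s.card :=
  Finset.card_image_of_injective s Prod.swap_injective

lemma exists_basis (A : CoherentConfig Ω) (x : Ω × Ω) : ∃ s, s ∈ A.S ∧ x ∈ s := by
  obtain ⟨s, hs, _⟩ := A.partition x
  exact ⟨s, hs⟩

lemma basis_unique (A : CoherentConfig Ω) {s t : Finset (Ω × Ω)} {x : Ω × Ω}
    (hs : s ∈ A.S) (ht : t ∈ A.S) (hxs : x ∈ s) (hxt : x ∈ t) : s = t := by
  obtain ⟨u, _, huniq⟩ := A.partition x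
  rw [huniq s ⟨hs, hxs⟩, huniq t ⟨ht, hxt⟩]

lemma c_path {A : CoherentConfig Ω} {r v u : Finset (Ω × Ω)} (hr : r ∈ A.S) (hv : v ∈ A.S)
    (hu : u ∈ A.S) {x : Ω × Ω} (hx : x ∈ u) (h : A.c r v u ≠ 0) :
    ∃ γ, (x.1, γ) ∈ r ∧ (γ, x.2) ∈ v := by
  have hs := A.c_spec r hr v hv u hu x hx
  rw [← hs] at h
  obtain ⟨γ, hγ⟩ := Finset.card_pos.1 (Nat.pos_of_ne_zero h)
  exact ⟨γ, (Finset.mem_filter.1 hγ).2⟩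

lemma c_ne_zero {A : CoherentConfig Ω} {r v u : Finset (Ω × Ω)} (hr : r ∈ A.S) (hv : v ∈ A.S)
    (hu : u ∈ A.S) {x : Ω × Ω} (hx : x ∈ u) {γ : Ω}
    (h1 : (x.1, γ) ∈ r) (h2 : (γ, x.2) ∈ v) : A.c r v u ≠ 0 := by
  have hγ : γ ∈ Finset.univ.filter (fun γ : Ω => (x.1, γ) ∈ r ∧ (γ, x.2) ∈ v) :=
    Finset.mem_filter.2 ⟨Finset.mem_univ _, h1, h2⟩
  have h0 : 0 < (Finset.univ.filter (fun γ : Ω => (x.1, γ) ∈ r ∧ (γ, x.2) ∈ v)).card :=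
    Finset.card_pos.2 ⟨γ, hγ⟩
  rw [A.c_spec r hr v hv u hu x hx] at h0
  exact h0.ne'

/-- The pointwise characterization of regularity: `s∘s*∘s ⊆ s`. -/
def Reg3 (s : Finset (Ω × Ω)) : Prop :=
  ∀ a b c d : Ω, (a, b) ∈ s → (c, b) ∈ s → (c, d) ∈ s → (a, d) ∈ s

lemma reg3_star {s : Finset (Ω × Ω)} (h : Reg3 s) : Reg3 (_root_.star s) := by
  intro a b c d h1 h2 h3
  rw [memStar] at h1 h2 h3 ⊢
  exact h d c b a h3 h2 h1

lemma regular_iff {A : CoherentConfig Ω} {s : Finset (Ω × Ω)} (hs : s ∈ A.S) :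
    Regular A s ↔ Reg3 s := by
  constructor
  · intro hreg a b c d h1 h2 h3
    obtain ⟨r, hr, hacr⟩ := exists_basis A (a, c)
    obtain ⟨u, hu, hadu⟩ := exists_basis A (a, d)
    have hst : _root_.star s ∈ A.S := starInS A hs
    have hcr : A.c s (_root_.star s) r ≠ 0 := c_ne_zero hs hst hr hacr h1 (memStar.2 h2)
    have hcu : A.c r s u ≠ 0 := c_ne_zero hr hs hu hadu hacr h3
    have hrmem : r ∈ cprod A {s} {_root_.star s} := by
      rw [cprod, Finset.mem_filter]
      exact ⟨hr, s, Finset.mem_singleton_self s, _root_.star s, Finset.mem_singleton_self _, hcr⟩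
    have humem : u ∈ cprod A (cprod A {s} {_root_.star s}) {s} := by
      rw [cprod, Finset.mem_filter]
      exact ⟨hu, r, hrmem, s, Finset.mem_singleton_self s, hcu⟩
    rw [hreg, Finset.mem_singleton] at humem
    exact humem ▸ hadu
  · intro hR
    rw [Regular]
    ext u
    rw [Finset.mem_singleton]
    constructor
    · intro hmem
      obtain ⟨huS, r, hr, v, hv, hcru⟩ := Finset.mem_filter.1 hmem
      obtain ⟨hrS, t', ht', w, hw, hcr⟩ := Finset.mem_filter.1 hr
      rw [Finset.mem_singleton] at ht' hw hv
      rw [ht', hw] at hcr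
      rw [hv] at hcru
      obtain ⟨x, hx⟩ := A.nonempty_mem u huS
      obtain ⟨c', hc1, hc2⟩ := c_path hrS hs huS hx hcru
      obtain ⟨b', hb1, hb2⟩ := c_path hs (starInS A hs) hrS hc1 hcr
      have hx' : (x.1, x.2) ∈ s := hR x.1 b' c' x.2 hb1 (memStar.1 hb2) hc2
      rw [Prod.mk.eta] at hx'
      exact basis_unique A huS hs hx hx'
    · intro hequ
      rw [hequ]
      obtain ⟨x, hx⟩ := A.nonempty_mem s hs
      have hx' : (x.1, x.2) ∈ s := by rw [Prod.mk.eta]; exact hx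
      obtain ⟨r, hrS, hr_mem⟩ := exists_basis A (x.1, x.1)
      rw [cprod, Finset.mem_filter]
      refine ⟨hs, r, ?_, s, Finset.mem_singleton_self s, ?_⟩
      · rw [cprod, Finset.mem_filter]
        exact ⟨hrS, s, Finset.mem_singleton_self s, _root_.star s, Finset.mem_singleton_self _,
          c_ne_zero hs (starInS A hs) hrS hr_mem (γ := x.2) hx' (memStar.2 hx')⟩
      · exact c_ne_zero hrS hs hs hx (γ := x.1) hr_mem hx'

/-! ### Fibers -/

lemma mem_diagRel {Δ : Finset Ω} {x y : Ω} : (x, y) ∈ diagRel Δ ↔ x = y ∧ x ∈ Δ := by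
  simp only [diagRel, Finset.mem_image, Prod.mk.injEq]
  constructor
  · rintro ⟨d, hd, rfl, rfl⟩; exact ⟨rfl, hd⟩
  · rintro ⟨rfl, hx⟩; exact ⟨x, hx, rfl, rfl⟩

lemma exists_fiber (A : CoherentConfig Ω) (a : Ω) : ∃ Δ : Finset Ω, IsFiber A Δ ∧ a ∈ Δ := by
  obtain ⟨e, he, hae⟩ := exists_basis A (a, a)
  have hd := A.diag_union e he ⟨(a, a), hae, rfl⟩
  refine ⟨e.image Prod.fst, ?_, Finset.mem_image.2 ⟨(a, a), hae, rfl⟩⟩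
  have heq : diagRel (e.image Prod.fst) = e := by
    ext ⟨x, y⟩
    rw [mem_diagRel]
    constructor
    · rintro ⟨rfl, hx⟩
      obtain ⟨z, hz, rfl⟩ := Finset.mem_image.1 hx
      have hz2 : z = (z.1, z.1) := by
        have := hd z hz
        exact Prod.ext rfl this.symm
      exact hz2 ▸ hz
    · intro hxy
      have hxyd : x = y := hd _ hxy
      exact ⟨hxyd, Finset.mem_image.2 ⟨(x, y), hxy, rfl⟩⟩
  rw [IsFiber, heq]
  exact he

lemma fst_mem_fiber {A : CoherentConfig Ω} {s : Finset (Ω × Ω)} (hs : s ∈ A.S) {Δ : Finset Ω}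
    (hΔ : IsFiber A Δ) {x₀ : Ω × Ω} (hx₀ : x₀ ∈ s) (h1 : x₀.1 ∈ Δ) :
    ∀ x ∈ s, x.1 ∈ Δ := by
  have hd : diagRel Δ ∈ A.S := hΔ
  have hx₀' : (x₀.1, x₀.2) ∈ s := by rw [Prod.mk.eta]; exact hx₀
  have hc : A.c (diagRel Δ) s s ≠ 0 :=
    c_ne_zero hd hs hs hx₀ (γ := x₀.1) (mem_diagRel.2 ⟨rfl, h1⟩) hx₀'
  intro x hx
  obtain ⟨γ, hγ1, _⟩ := c_path hd hs hs hx hc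
  exact (mem_diagRel.1 hγ1).2

lemma snd_mem_fiber {A : CoherentConfig Ω} {s : Finset (Ω × Ω)} (hs : s ∈ A.S) {Δ : Finset Ω}
    (hΔ : IsFiber A Δ) {x₀ : Ω × Ω} (hx₀ : x₀ ∈ s) (h2 : x₀.2 ∈ Δ) :
    ∀ x ∈ s, x.2 ∈ Δ := by
  have hd : diagRel Δ ∈ A.S := hΔ
  have hx₀' : (x₀.1, x₀.2) ∈ s := by rw [Prod.mk.eta]; exact hx₀
  have hc : A.c s (diagRel Δ) s ≠ 0 :=
    c_ne_zero hs hd hs hx₀ (γ := x₀.2) hx₀' (mem_diagRel.2 ⟨rfl, h2⟩)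
  intro x hx
  obtain ⟨γ, _, hγ2⟩ := c_path hs hd hs hx hc
  obtain ⟨heq, hmem⟩ := mem_diagRel.1 hγ2
  exact heq ▸ hmem

lemma outs_card_const {A : CoherentConfig Ω} {s : Finset (Ω × Ω)} (hs : s ∈ A.S) {Δ : Finset Ω}
    (hΔ : IsFiber A Δ) {x₀ : Ω × Ω} (hx₀ : x₀ ∈ s) (h1 : x₀.1 ∈ Δ) {a' : Ω} (ha' : a' ∈ Δ) :
    (outs s a').card = (outs s x₀.1).card := by
  have hst : _root_.star s ∈ A.S := starInS A hs
  have key : ∀ a ∈ Δ, (Finset.univ.filter fun γ : Ω => (a, γ) ∈ s ∧ (γ, a) ∈ _root_.star s).card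
      = A.c s (_root_.star s) (diagRel Δ) := by
    intro a ha
    exact A.c_spec s hs (_root_.star s) hst (diagRel Δ) hΔ (a, a) (mem_diagRel.2 ⟨rfl, ha⟩)
  have simp_filter : ∀ a : Ω,
      (Finset.univ.filter fun γ : Ω => (a, γ) ∈ s ∧ (γ, a) ∈ _root_.star s) = outs s a := by
    intro a
    ext γ
    simp only [Finset.mem_filter, Finset.mem_univ, true_and, mem_outs, memStar]
    tauto
  rw [← simp_filter a', ← simp_filter x₀.1, key a' ha', key x₀.1 h1]

/-! ### Counting -/

lemma card_outs_filter (s : Finset (Ω × Ω)) (a : Ω) :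
    (s.filter fun x => x.1 = a).card = (outs s a).card := by
  apply Finset.card_bij (fun x _ => x.2)
  · intro x hx
    obtain ⟨hxs, hx1⟩ := Finset.mem_filter.1 hx
    refine mem_outs.2 ?_
    rw [← hx1, Prod.mk.eta]
    exact hxs
  · intro x hx y hy hxy
    obtain ⟨_, hx1⟩ := Finset.mem_filter.1 hx
    obtain ⟨_, hy1⟩ := Finset.mem_filter.1 hy
    exact Prod.ext (hx1.trans hy1.symm) hxy
  · intro c hc
    exact ⟨(a, c), Finset.mem_filter.2 ⟨mem_outs.1 hc, rfl⟩, rfl⟩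

lemma card_eq_card_mul {s : Finset (Ω × Ω)} {Δ : Finset Ω} {n : ℕ}
    (hsub : ∀ x ∈ s, x.1 ∈ Δ) (hdeg : ∀ a ∈ Δ, (outs s a).card = n) :
    s.card = Δ.card * n := by
  rw [Finset.card_eq_sum_card_fiberwise hsub]
  rw [Finset.sum_congr rfl (fun a ha => (card_outs_filter s a).trans (hdeg a ha))]
  rw [Finset.sum_const, smul_eq_mul]

/-- In an intra-fiber situation valencies of `s` and `s*` agree; between distinct fibers both
are `p`. -/
lemma valency_pair {p : ℕ} (hp : p.Prime) (A : CoherentConfig Ω)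
    (hfib : ∀ Δ : Finset Ω, IsFiber A Δ → WreathFiber p A Δ)
    (hinter : ∀ u ∈ A.S, ∀ Δ Γ : Finset Ω, IsFiber A Δ → IsFiber A Γ → Δ ≠ Γ →
      u ⊆ Δ ×ˢ Γ → HasValency u p)
    {s : Finset (Ω × Ω)} (hs : s ∈ A.S) {Δ Γ : Finset Ω} (hΔ : IsFiber A Δ) (hΓ : IsFiber A Γ)
    {x₀ : Ω × Ω} (hx₀ : x₀ ∈ s) (h1 : x₀.1 ∈ Δ) (h2 : x₀.2 ∈ Γ) :
    (HasValency s 1 ∧ HasValency (_root_.star s) 1) ∨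
      (HasValency s p ∧ HasValency (_root_.star s) p) := by
  have hst : _root_.star s ∈ A.S := starInS A hs
  have hf1 : ∀ x ∈ s, x.1 ∈ Δ := fst_mem_fiber hs hΔ hx₀ h1
  have hf2 : ∀ x ∈ s, x.2 ∈ Γ := snd_mem_fiber hs hΓ hx₀ h2
  have hx₀p : (x₀.1, x₀.2) ∈ s := by rw [Prod.mk.eta]; exact hx₀
  have hx₀' : (x₀.2, x₀.1) ∈ _root_.star s := memStar.2 hx₀p
  have hg1 : ∀ x ∈ _root_.star s, x.1 ∈ Γ := fst_mem_fiber hst hΓ hx₀' h2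
  have hg2 : ∀ x ∈ _root_.star s, x.2 ∈ Δ := snd_mem_fiber hst hΔ hx₀' h1
  have hssub : s ⊆ Δ ×ˢ Γ := fun x hx => Finset.mem_product.2 ⟨hf1 x hx, hf2 x hx⟩
  have hstsub : _root_.star s ⊆ Γ ×ˢ Δ := fun x hx => Finset.mem_product.2 ⟨hg1 x hx, hg2 x hx⟩
  by_cases hΔΓ : Δ = Γ
  · subst hΔΓ
    have hwf := hfib Δ hΔ
    have hΔc : Δ.card = p ^ 2 := hwf.2.1
    have hΔpos : 0 < Δ.card := by rw [hΔc]; exact pow_pos hp.pos 2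
    rcases hwf.2.2.2.1 s hs hssub with hv1 | hvp <;>
      rcases hwf.2.2.2.1 (_root_.star s) hst hstsub with hw1 | hwp
    · exact Or.inl ⟨hv1, hw1⟩
    · exfalso
      have hc1 : s.card = Δ.card * 1 := card_eq_card_mul hf1 (fun a ha =>
        (outs_card_const hs hΔ hx₀ h1 ha).trans (hv1 x₀ hx₀))
      have hc2 : (_root_.star s).card = Δ.card * p := card_eq_card_mul hg1 (fun a ha =>
        (outs_card_const hst hΔ hx₀' h2 ha).trans (hwp _ hx₀'))
      rw [starCard, hc1] at hc2
      have h1p : (1 : ℕ) = p := Nat.eq_of_mul_eq_mul_left hΔpos hc2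
      exact hp.one_lt.ne' h1p.symm
    · exfalso
      have hc1 : s.card = Δ.card * p := card_eq_card_mul hf1 (fun a ha =>
        (outs_card_const hs hΔ hx₀ h1 ha).trans (hvp x₀ hx₀))
      have hc2 : (_root_.star s).card = Δ.card * 1 := card_eq_card_mul hg1 (fun a ha =>
        (outs_card_const hst hΔ hx₀' h2 ha).trans (hw1 _ hx₀'))
      rw [starCard, hc1] at hc2
      have h1p : p = 1 := Nat.eq_of_mul_eq_mul_left hΔpos hc2
      exact hp.one_lt.ne' h1p
    · exact Or.inr ⟨hvp, hwp⟩
  · exact Or.inr ⟨hinter s hs Δ Γ hΔ hΓ hΔΓ hssub,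
      hinter (_root_.star s) hst Γ Δ hΓ hΔ (Ne.symm hΔΓ) hstsub⟩

/-! ### The thin equivalence on a fiber -/

/-- the set of β' sharing a common `t`-out-neighbour with β -/
noncomputable def EtOut (t : Finset (Ω × Ω)) (b : Ω) : Finset Ω :=
  Finset.univ.filter fun b' => ∃ c, (b, c) ∈ t ∧ (b', c) ∈ t

/-- the union of out-neighbourhoods along thin relations of the fiber Δ -/
noncomputable def TUout (A : CoherentConfig Ω) (Δ : Finset Ω) (b : Ω) : Finset Ω :=
  (A.S.filter fun e => IsThinOn A Δ e).biUnion fun e => outs e b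

lemma mem_EtOut {t : Finset (Ω × Ω)} {b b' : Ω} :
    b' ∈ EtOut t b ↔ ∃ c, (b, c) ∈ t ∧ (b', c) ∈ t := by
  simp [EtOut]

lemma etout_card {t : Finset (Ω × Ω)} (hRt : Reg3 t) {p : ℕ}
    (htv' : HasValency (_root_.star t) p) {b c₀ : Ω} (h : (b, c₀) ∈ t) :
    (EtOut t b).card = p := by
  have heq : EtOut t b = outs (_root_.star t) c₀ := by
    ext b'
    rw [mem_EtOut, mem_outs, memStar]
    constructor
    · rintro ⟨c, hbc, hb'c⟩
      exact hRt b' c b c₀ hb'c hbc h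
    · intro h'
      exact ⟨c₀, h, h'⟩
  rw [heq]
  exact htv' (c₀, b) (memStar.2 h)

lemma tuout_card (A : CoherentConfig Ω) {p : ℕ} {Δ : Finset Ω} (hΔ : IsFiber A Δ)
    (hwf : WreathFiber p A Δ) {b : Ω} (hb : b ∈ Δ) : (TUout A Δ b).card = p := by
  rw [TUout, Finset.card_biUnion]
  · have hone : ∀ e ∈ A.S.filter (fun e => IsThinOn A Δ e), (outs e b).card = 1 := by
      intro e hef
      obtain ⟨he, hthin⟩ := Finset.mem_filter.1 hef
      obtain ⟨x, hx⟩ := A.nonempty_mem e he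
      have hx1 : x.1 ∈ Δ := (Finset.mem_product.1 (hthin.2.1 hx)).1
      exact (outs_card_const he hΔ hx hx1 hb).trans (hthin.2.2 x hx)
    rw [Finset.sum_congr rfl hone, Finset.sum_const, smul_eq_mul, mul_one, hwf.2.2.1]
  · intro e he e' he' hne
    rw [Function.onFun_apply, Finset.disjoint_left]
    intro c hc hc'
    exact hne (basis_unique A (Finset.mem_filter.1 he).1 (Finset.mem_filter.1 he').1
      (mem_outs.1 hc) (mem_outs.1 hc'))

lemma mem_etout_thin {p : ℕ} (hp : p.Prime) {A : CoherentConfig Ω} {t : Finset (Ω × Ω)}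
    (ht : t ∈ A.S) (hRt : Reg3 t) {Δ : Finset Ω} (hΔ : IsFiber A Δ) (hwf : WreathFiber p A Δ)
    (ht1 : ∀ x ∈ t, x.1 ∈ Δ) (htv' : HasValency (_root_.star t) p)
    {b b' : Ω} (hb' : b' ∈ EtOut t b) {e : Finset (Ω × Ω)} (he : e ∈ A.S)
    (hbe : (b, b') ∈ e) : IsThinOn A Δ e := by
  obtain ⟨c, hbc, hb'c⟩ := mem_EtOut.1 hb'
  have hbΔ : b ∈ Δ := ht1 _ hbc
  have hb'Δ : b' ∈ Δ := ht1 _ hb'c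
  have hesub : e ⊆ Δ ×ˢ Δ := fun x hx =>
    Finset.mem_product.2 ⟨fst_mem_fiber he hΔ hbe hbΔ x hx, snd_mem_fiber he hΔ hbe hb'Δ x hx⟩
  rcases hwf.2.2.2.1 e he hesub with h1 | hpv
  · exact ⟨he, hesub, h1⟩
  exfalso
  have hEt : (EtOut t b).card = p := etout_card hRt htv' hbc
  have hst : _root_.star t ∈ A.S := starInS A ht
  have hcne : A.c t (_root_.star t) e ≠ 0 := c_ne_zero ht hst he hbe hbc (memStar.2 hb'c)
  have houtsub : outs e b ⊆ EtOut t b := by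
    intro c' hc'
    obtain ⟨γ, hγ1, hγ2⟩ := c_path ht hst he (mem_outs.1 hc') hcne
    exact mem_EtOut.2 ⟨γ, hγ1, memStar.1 hγ2⟩
  have hbmem : b ∈ EtOut t b := mem_EtOut.2 ⟨c, hbc, hbc⟩
  have hcard_e : (outs e b).card = p := hpv (b, b') hbe
  have hbnot : b ∉ outs e b := by
    intro hmem
    have hdiag := A.diag_union e he ⟨(b, b), mem_outs.1 hmem, rfl⟩
    have hsub1 : outs e b ⊆ {b} := by
      intro γ hγ
      have hbγ : b = γ := hdiag (b, γ) (mem_outs.1 hγ)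
      rw [Finset.mem_singleton]
      exact hbγ.symm
    have hle : (outs e b).card ≤ 1 := by
      calc (outs e b).card ≤ ({b} : Finset Ω).card := Finset.card_le_card hsub1
        _ = 1 := Finset.card_singleton b
    rw [hcard_e] at hle
    have := hp.two_le
    omega
  have hins : insert b (outs e b) ⊆ EtOut t b := Finset.insert_subset hbmem houtsub
  have hcard2 := Finset.card_le_card hins
  rw [Finset.card_insert_of_notMem hbnot, hcard_e, hEt] at hcard2
  omega

lemma etout_eq_tuout {p : ℕ} (hp : p.Prime) {A : CoherentConfig Ω} {t : Finset (Ω × Ω)}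
    (ht : t ∈ A.S) (hRt : Reg3 t) {Δ : Finset Ω} (hΔ : IsFiber A Δ) (hwf : WreathFiber p A Δ)
    (ht1 : ∀ x ∈ t, x.1 ∈ Δ) (htv' : HasValency (_root_.star t) p)
    {b c₀ : Ω} (hb : (b, c₀) ∈ t) : EtOut t b = TUout A Δ b := by
  have hbΔ : b ∈ Δ := ht1 _ hb
  have hE : (EtOut t b).card = p := etout_card hRt htv' hb
  have hT : (TUout A Δ b).card = p := tuout_card A hΔ hwf hbΔ
  have hsub : EtOut t b ⊆ TUout A Δ b := by
    intro b' hb'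
    obtain ⟨e, he, hbe⟩ := exists_basis A (b, b')
    have hthin := mem_etout_thin hp ht hRt hΔ hwf ht1 htv' hb' he hbe
    exact Finset.mem_biUnion.2 ⟨e, Finset.mem_filter.2 ⟨he, hthin⟩, mem_outs.2 hbe⟩
  exact Finset.eq_of_subset_of_card_le hsub (le_of_eq (hT.trans hE.symm))

/-- Key lemma: two points with a common `s`-in-neighbour have a common `t`-out-neighbour,
when `s, t` are regular of valency `p` meeting in the fiber `Δ`. -/
lemma key_lemma {p : ℕ} (hp : p.Prime) (A : CoherentConfig Ω)
    (hfib : ∀ Δ : Finset Ω, IsFiber A Δ → WreathFiber p A Δ)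
    {s t : Finset (Ω × Ω)} (hs : s ∈ A.S) (ht : t ∈ A.S)
    (hRs : Reg3 s) (hRt : Reg3 t) {Δ : Finset Ω} (hΔ : IsFiber A Δ)
    (hs2 : ∀ x ∈ s, x.2 ∈ Δ) (ht1 : ∀ x ∈ t, x.1 ∈ Δ)
    (hsvp : HasValency s p) (htpv' : HasValency (_root_.star t) p)
    {a b b' c₀ : Ω} (h1 : (a, b) ∈ s) (h2 : (a, b') ∈ s) (hc₀ : (b, c₀) ∈ t) :
    ∃ c, (b, c) ∈ t ∧ (b', c) ∈ t := by
  have hwf := hfib Δ hΔ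
  have hss : _root_.star s ∈ A.S := starInS A hs
  have hRss : Reg3 (_root_.star s) := reg3_star hRs
  have hss1 : ∀ x ∈ _root_.star s, x.1 ∈ Δ := by
    intro x hx
    have hx' : (x.1, x.2) ∈ _root_.star s := by rw [Prod.mk.eta]; exact hx
    exact hs2 _ (memStar.1 hx')
  have hssv' : HasValency (_root_.star (_root_.star s)) p := by rw [starStar]; exact hsvp
  have h1' : EtOut (_root_.star s) b = TUout A Δ b :=
    etout_eq_tuout hp hss hRss hΔ hwf hss1 hssv' (memStar.2 h1)
  have h2' : EtOut t b = TUout A Δ b :=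
    etout_eq_tuout hp ht hRt hΔ hwf ht1 htpv' hc₀
  have hb' : b' ∈ EtOut (_root_.star s) b :=
    mem_EtOut.2 ⟨a, memStar.2 h1, memStar.2 h2⟩
  rw [h1', ← h2'] at hb'
  exact mem_EtOut.1 hb'

theorem stmt13 (p : ℕ) (hp : p.Prime) (A : CoherentConfig Ω)
    (hfib : ∀ Δ : Finset Ω, IsFiber A Δ → WreathFiber p A Δ)
    (hinter : ∀ u ∈ A.S, ∀ Δ Γ : Finset Ω, IsFiber A Δ → IsFiber A Γ → Δ ≠ Γ →
      u ⊆ Δ ×ˢ Γ → HasValency u p) :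
    Equivalence (fun α β : Ω => ∃ s ∈ A.S, Regular A s ∧ (α, β) ∈ s) := by
  constructor
  · -- reflexivity
    intro a
    obtain ⟨e, he, hae⟩ := exists_basis A (a, a)
    refine ⟨e, he, (regular_iff he).2 ?_, hae⟩
    intro x y z w h1 h2 h3
    have hd := A.diag_union e he ⟨(a, a), hae, rfl⟩
    have e1 : x = y := hd (x, y) h1
    have e2 : z = y := hd (z, y) h2
    have e3 : z = w := hd (z, w) h3
    have e4 : w = y := (e2.symm.trans e3).symm
    rw [e4]
    exact h1
  · -- symmetry
    rintro a b ⟨s, hs, hreg, hab⟩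
    have hst := starInS A hs
    exact ⟨_root_.star s, hst, (regular_iff hst).2 (reg3_star ((regular_iff hs).1 hreg)),
      memStar.2 hab⟩
  · -- transitivity
    rintro α β γ ⟨s, hs, hsreg, hαβ⟩ ⟨t, ht, htreg, hβγ⟩
    obtain ⟨Δ₁, hΔ₁, hα1⟩ := exists_fiber A α
    obtain ⟨Δ₂, hΔ₂, hβ2⟩ := exists_fiber A β
    obtain ⟨Δ₃, hΔ₃, hγ3⟩ := exists_fiber A γ
    obtain ⟨u, hu, hαγ⟩ := exists_basis A (α, γ)
    have hRs := (regular_iff hs).1 hsreg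
    have hRt := (regular_iff ht).1 htreg
    have hs1 : ∀ x ∈ s, x.1 ∈ Δ₁ := fst_mem_fiber hs hΔ₁ hαβ hα1
    have hs2 : ∀ x ∈ s, x.2 ∈ Δ₂ := snd_mem_fiber hs hΔ₂ hαβ hβ2
    have ht1 : ∀ x ∈ t, x.1 ∈ Δ₂ := fst_mem_fiber ht hΔ₂ hβγ hβ2
    have ht2 : ∀ x ∈ t, x.2 ∈ Δ₃ := snd_mem_fiber ht hΔ₃ hβγ hγ3
    refine ⟨u, hu, (regular_iff hu).2 ?_, hαγ⟩
    have huval := valency_pair hp A hfib hinter hu hΔ₁ hΔ₃ hαγ hα1 hγ3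
    rcases huval with ⟨hu1v, _⟩ | ⟨hupv, _⟩
    · -- u is thin
      intro a b c d hab hcb hcd
      have h1 : (outs u c).card = 1 := hu1v (c, b) hcb
      have hbd : b = d :=
        Finset.card_le_one.1 h1.le b (mem_outs.2 hcb) d (mem_outs.2 hcd)
      exact hbd ▸ hab
    · -- u has valency p
      have hust : ∀ x ∈ u, ∃ b', (x.1, b') ∈ s ∧ (b', x.2) ∈ t := fun x hx =>
        c_path hs ht hu hx (c_ne_zero hs ht hu hαγ hαβ hβγ)
      have houtu : ∀ a ∈ Δ₁, (outs u a).card = p := fun a ha =>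
        (outs_card_const hu hΔ₁ hαγ hα1 ha).trans (hupv (α, γ) hαγ)
      have hsv := valency_pair hp A hfib hinter hs hΔ₁ hΔ₂ hαβ hα1 hβ2
      have htv := valency_pair hp A hfib hinter ht hΔ₂ hΔ₃ hβγ hβ2 hγ3
      have hmem_u : ∀ a ∈ Δ₁, ∀ W : Finset Ω, outs u a ⊆ W → W.card ≤ p →
          ∀ c' ∈ W, (a, c') ∈ u := by
        intro a ha W hsubW hcW c' hc'
        have hWeq : outs u a = W :=
          Finset.eq_of_subset_of_card_le hsubW (by rw [houtu a ha]; exact hcW)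
        rw [← hWeq] at hc'
        exact mem_outs.1 hc'
      -- s∘t ⊆ u
      have hstu : ∀ a b' c', (a, b') ∈ s → (b', c') ∈ t → (a, c') ∈ u := by
        intro a b' c' habs hbct
        have ha : a ∈ Δ₁ := hs1 _ habs
        have hb'2 : b' ∈ Δ₂ := hs2 _ habs
        rcases htv with ⟨ht1v, _⟩ | ⟨htpv, htpv'⟩
        · -- t thin: use the union bound
          refine hmem_u a ha ((outs s a).biUnion fun b'' => outs t b'') ?_ ?_ c' ?_
          · intro c'' hc''
            obtain ⟨b'', hb1, hb2⟩ := hust (a, c'') (mem_outs.1 hc'')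
            exact Finset.mem_biUnion.2 ⟨b'', mem_outs.2 hb1, mem_outs.2 hb2⟩
          · calc ((outs s a).biUnion fun b'' => outs t b'').card
                ≤ ∑ b'' ∈ outs s a, (outs t b'').card := Finset.card_biUnion_le
              _ ≤ ∑ _b'' ∈ outs s a, 1 := Finset.sum_le_sum (fun b'' hb'' => le_of_eq
                  ((outs_card_const ht hΔ₂ hβγ hβ2 (hs2 _ (mem_outs.1 hb''))).trans
                    (ht1v (β, γ) hβγ)))
              _ = (outs s a).card := by simp
              _ ≤ p := by
                  rcases hsv with ⟨hsv1, _⟩ | ⟨hsvp, _⟩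
                  · rw [(outs_card_const hs hΔ₁ hαβ hα1 ha).trans (hsv1 (α, β) hαβ)]
                    exact hp.one_lt.le
                  · rw [(outs_card_const hs hΔ₁ hαβ hα1 ha).trans (hsvp (α, β) hαβ)]
          · exact Finset.mem_biUnion.2 ⟨b', mem_outs.2 habs, mem_outs.2 hbct⟩
        · -- t has valency p
          have houtt : (outs t b').card = p :=
            (outs_card_const ht hΔ₂ hβγ hβ2 hb'2).trans (htpv (β, γ) hβγ)
          refine hmem_u a ha (outs t b') ?_ houtt.le c' (mem_outs.2 hbct)
          intro c'' hc''
          obtain ⟨b'', hb1, hb2⟩ := hust (a, c'') (mem_outs.1 hc'')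
          rcases hsv with ⟨hsv1, _⟩ | ⟨hsvp, _⟩
          · have hbb : b'' = b' := by
              have h1s : (outs s a).card = 1 :=
                (outs_card_const hs hΔ₁ hαβ hα1 ha).trans (hsv1 (α, β) hαβ)
              exact Finset.card_le_one.1 h1s.le b'' (mem_outs.2 hb1) b' (mem_outs.2 habs)
            exact mem_outs.2 (hbb ▸ hb2)
          · obtain ⟨c₀, hcc1, hcc2⟩ :=
              key_lemma hp A hfib hs ht hRs hRt hΔ₂ hs2 ht1 hsvp htpv' hb1 habs hb2
            exact mem_outs.2 (hRt b' c₀ b'' c'' hcc2 hcc1 hb2)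
      -- conclude Reg3 u
      intro a b c d hab hcb hcd
      obtain ⟨β₁, h1s, h1t⟩ := hust (a, b) hab
      obtain ⟨β₂, h2s, h2t⟩ := hust (c, b) hcb
      obtain ⟨β₃, h3s, h3t⟩ := hust (c, d) hcd
      rcases htv with ⟨_, ht1v'⟩ | ⟨htpv, htpv'⟩
      · -- t* thin: β₁ = β₂
        have hb3 : b ∈ Δ₃ := ht2 _ h1t
        have hβγ' : (γ, β) ∈ _root_.star t := memStar.2 hβγ
        have hin : (outs (_root_.star t) b).card = 1 :=
          (outs_card_const (starInS A ht) hΔ₃ hβγ' hγ3 hb3).trans (ht1v' (γ, β) hβγ')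
        have h12 : β₁ = β₂ := Finset.card_le_one.1 hin.le β₁ (mem_outs.2 (memStar.2 h1t))
          β₂ (mem_outs.2 (memStar.2 h2t))
        exact hstu a β₃ d (hRs a β₂ c β₃ (h12 ▸ h1s) h2s h3s) h3t
      · rcases hsv with ⟨hsv1, _⟩ | ⟨hsvp, _⟩
        · -- s thin: β₂ = β₃
          have hc1 : c ∈ Δ₁ := hs1 _ h2s
          have h1s' : (outs s c).card = 1 :=
            (outs_card_const hs hΔ₁ hαβ hα1 hc1).trans (hsv1 (α, β) hαβ)
          have h23 : β₂ = β₃ :=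
            Finset.card_le_one.1 h1s'.le β₂ (mem_outs.2 h2s) β₃ (mem_outs.2 h3s)
          exact hstu a β₁ d h1s (hRt β₁ b β₂ d h1t h2t (h23 ▸ h3t))
        · -- both valency p
          obtain ⟨c₀, hcc1, hcc2⟩ :=
            key_lemma hp A hfib hs ht hRs hRt hΔ₂ hs2 ht1 hsvp htpv' h2s h3s h2t
          have h3b : (β₃, b) ∈ t := hRt β₃ c₀ β₂ b hcc2 hcc1 h2t
          exact hstu a β₁ d h1s (hRt β₁ b β₃ d h1t h3b h3t)
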